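/- Theorem 4.1 (g-monotonicity of the Lax–Friedrichs-like operator): Let γ > 0 and let F : ℝ × ℝ → ℝ be such that for every x, p ↦ F(p,x) is differentiable with −γ ≤ ∂F/∂p(p,x) ≤ −1/γ for all (p,x). Let β₁, β₂, β₃ ≥ 0 with β₁ + β₂ + β₃ = 1 and let α > max{β₁, β₃}·γ. Then the numerical operator F̂_β(p₁,p₂,p₃,x) := F(β₁p₁ + β₂p₂ + β₃p₃, x) + α(p₁ − 2p₂ + p₃) is g-monotone; in fact, for each fixed values of the remaining arguments, F̂_β is strictly increasing in p₁, strictly increasing in p₃, and strictly decreasing in p₂. -/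

import Mathlib

/-- The Lax–Friedrichs-like numerical operator
`F̂_β(p₁,p₂,p₃,x) := F(β₁p₁ + β₂p₂ + β₃p₃, x) + α(p₁ − 2p₂ + p₃)`;
the term `α(p₁ − 2p₂ + p₃)` is the numerical moment. -/
noncomputable def laxFriedrichsOp (F : ℝ → ℝ → ℝ) (β₁ β₂ β₃ α : ℝ)
    (p₁ p₂ p₃ x : ℝ) : ℝ :=
  F (β₁ * p₁ + β₂ * p₂ + β₃ * p₃) x + α * (p₁ - 2 * p₂ + p₃)

/-- Theorem 4.1 (g-monotonicity of the Lax–Friedrichs-like operator): if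
`p ↦ F(p,x)` is differentiable with `−γ ≤ ∂F/∂p ≤ −1/γ` everywhere, `β₁,β₂,β₃ ≥ 0` with
`β₁+β₂+β₃ = 1`, and `α > max{β₁,β₃}·γ`, then `F̂_β` is g-monotone; in fact it is strictly
increasing in `p₁`, strictly increasing in `p₃`, and strictly decreasing in `p₂`. -/
theorem laxFriedrichsOp_gmonotone (γ : ℝ) (hγ : 0 < γ) (F : ℝ → ℝ → ℝ)
    (hFdiff : ∀ x : ℝ, Differentiable ℝ fun p => F p x)
    (hFderiv : ∀ p x : ℝ, deriv (fun q => F q x) p ∈ Set.Icc (-γ) (-(1 / γ)))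
    (β₁ β₂ β₃ : ℝ) (hβ₁ : 0 ≤ β₁) (hβ₂ : 0 ≤ β₂) (hβ₃ : 0 ≤ β₃)
    (hsum : β₁ + β₂ + β₃ = 1)
    (α : ℝ) (hα : max β₁ β₃ * γ < α) :
    (∀ p₂ p₃ x : ℝ, StrictMono fun p₁ => laxFriedrichsOp F β₁ β₂ β₃ α p₁ p₂ p₃ x) ∧
    (∀ p₁ p₂ x : ℝ, StrictMono fun p₃ => laxFriedrichsOp F β₁ β₂ β₃ α p₁ p₂ p₃ x) ∧
    (∀ p₁ p₃ x : ℝ, StrictAnti fun p₂ => laxFriedrichsOp F β₁ β₂ β₃ α p₁ p₂ p₃ x) := by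
  have hαpos : 0 < α := lt_of_le_of_lt (by positivity) hα
  -- derivative of the affine composition
  have hder : ∀ (a b c d x : ℝ) (t : ℝ),
      HasDerivAt (fun t => F (a * t + b) x + (c * t + d))
        (deriv (fun q => F q x) (a * t + b) * a + c * 1) t := by
    intro a b c d x t
    have hF := (hFdiff x (a * t + b)).hasDerivAt
    have h1 : HasDerivAt (fun t : ℝ => a * t + b) (a * 1) t :=
      ((hasDerivAt_id t).const_mul a).add_const b
    have h2 := hF.comp t h1
    have h3 : HasDerivAt (fun t : ℝ => c * t + d) (c * 1) t :=
      ((hasDerivAt_id t).const_mul c).add_const d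
    exact (h2.add h3).congr_deriv (by ring)
  have main : ∀ a b c d x : ℝ, 0 ≤ a → a * γ < c →
      StrictMono (fun t => F (a * t + b) x + (c * t + d)) := by
    intro a b c d x ha hc
    apply strictMono_of_deriv_pos
    intro t
    rw [(hder a b c d x t).deriv]
    have h := hFderiv (a * t + b) x
    nlinarith [h.1, h.2, mul_nonneg ha hγ.le]
  have mainA : ∀ a b c d x : ℝ, 0 ≤ a → c < 0 →
      StrictAnti (fun t => F (a * t + b) x + (c * t + d)) := by
    intro a b c d x ha hc
    apply strictAnti_of_deriv_neg
    intro t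
    rw [(hder a b c d x t).deriv]
    have h := hFderiv (a * t + b) x
    have h1γ : 0 < 1 / γ := by positivity
    nlinarith [h.2, mul_nonneg ha h1γ.le]
  refine ⟨?_, ?_, ?_⟩
  · intro p₂ p₃ x
    have := main β₁ (β₂ * p₂ + β₃ * p₃) α (α * (-(2 * p₂) + p₃)) x hβ₁
      (lt_of_le_of_lt (mul_le_mul_of_nonneg_right (le_max_left _ _) hγ.le) hα)
    convert this using 2 with t
    simp only [laxFriedrichsOp]
    ring_nf
  · intro p₁ p₂ x
    have := main β₃ (β₁ * p₁ + β₂ * p₂) α (α * (p₁ - 2 * p₂)) x hβ₃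
      (lt_of_le_of_lt (mul_le_mul_of_nonneg_right (le_max_right _ _) hγ.le) hα)
    convert this using 2 with t
    simp only [laxFriedrichsOp]
    ring_nf
  · intro p₁ p₃ x
    have := mainA β₂ (β₁ * p₁ + β₃ * p₃) (-(2 * α)) (α * (p₁ + p₃)) x hβ₂
      (by linarith)
    convert this using 2 with t
    simp only [laxFriedrichsOp]
    ring_nf
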